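/- arXiv:1801.06881 — 3 statements merged into one kernel-verified Lean document; each statement's English description precedes it below -/
import Mathlib

section
/- Let a, b, c, d ∈ ℂ with ad − bc = 1 (an element g of SL(2,ℂ)), and let z, w ∈ ℂ satisfy cz + d ≠ 0 and −conj(b)·w + conj(a) ≠ 0. Set g(z) = (az+b)/(cz+d) and τ(g)(w) = (conj(d)·w − conj(c))/(−conj(b)·w + conj(a)). Then (1 + g(z)·conj(τ(g)(w))) · (cz+d) · (−b·conj(w) + a) = 1 + z·conj(w). Consequently, with k_c(z,w) = (1 + z·conj(w))² and automorphy factor j(g,z) = (cz+d)^{−2}, one has k_c(g(z), τ(g)(w)) = j(g,z) · k_c(z,w) · conj(j(τ(g),w)). -/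
open Complex ComplexConjugate

/-- Covariance of the compact automorphy kernel `k_c(z,w) = (1+z·conj w)²` of `ℂP¹`
under `g ∈ SL(2,ℂ)` and its compact conjugate `τ(g)`. -/
theorem kc_covariance (a b c d z w : ℂ) (hg : a * d - b * c = 1)
    (hz : c * z + d ≠ 0) (hw : -(conj b) * w + conj a ≠ 0) :
    (1 + ((a * z + b) / (c * z + d)) *
        conj ((conj d * w - conj c) / (-(conj b) * w + conj a))) *
      (c * z + d) * (-b * conj w + a) = 1 + z * conj w ∧
    (1 + ((a * z + b) / (c * z + d)) *
        conj ((conj d * w - conj c) / (-(conj b) * w + conj a))) ^ 2 =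
      (c * z + d) ^ (-2 : ℤ) * (1 + z * conj w) ^ 2 *
        conj ((-(conj b) * w + conj a) ^ (-2 : ℤ)) := by
  have hw' : -b * conj w + a ≠ 0 := by
    intro h
    apply hw
    have := congrArg conj h
    simpa using this
  have h1 : (1 + ((a * z + b) / (c * z + d)) *
      conj ((conj d * w - conj c) / (-(conj b) * w + conj a))) *
      (c * z + d) * (-b * conj w + a) = 1 + z * conj w := by
    rw [map_div₀]
    simp only [map_sub, map_add, map_mul, map_neg, Complex.conj_conj]
    have key : ((a * z + b) * (d * conj w - c)) / ((c * z + d) * (-b * conj w + a)) *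
        ((c * z + d) * (-b * conj w + a)) = (a * z + b) * (d * conj w - c) :=
      div_mul_cancel₀ _ (mul_ne_zero hz hw')
    calc (1 + (a * z + b) / (c * z + d) * ((d * conj w - c) / (-b * conj w + a))) *
          (c * z + d) * (-b * conj w + a)
        = (c * z + d) * (-b * conj w + a) +
            ((a * z + b) * (d * conj w - c)) / ((c * z + d) * (-b * conj w + a)) *
              ((c * z + d) * (-b * conj w + a)) := by
          rw [div_mul_div_comm]; ring
      _ = (c * z + d) * (-b * conj w + a) + (a * z + b) * (d * conj w - c) := by rw [key]
      _ = 1 + z * conj w := by linear_combination (1 + z * conj w) * hg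
  refine ⟨h1, ?_⟩
  have h2 : (1 + ((a * z + b) / (c * z + d)) *
      conj ((conj d * w - conj c) / (-(conj b) * w + conj a))) =
      (1 + z * conj w) / ((c * z + d) * (-b * conj w + a)) := by
    rw [eq_div_iff (mul_ne_zero hz hw'), ← mul_assoc, h1]
  rw [h2]
  have hc : conj ((-(conj b) * w + conj a) ^ (-2 : ℤ)) = (-b * conj w + a) ^ (-2 : ℤ) := by
    rw [map_zpow₀]
    simp
  rw [hc, div_pow, mul_pow, zpow_neg, zpow_neg, zpow_two, zpow_two]
  field_simp
end

section
/- The set 𝒮 = {(z,w) ∈ ℂ×ℂ : 1 + z·conj(w) does not lie in the real interval (−∞,0]}, equipped with the subspace topology of ℂ×ℂ, is simply connected. -/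
open Complex ComplexConjugate

lemma S_starConvex :
    StarConvex ℝ (0 : ℂ × ℂ)
      {p : ℂ × ℂ | ¬∃ r : ℝ, r ≤ 0 ∧ 1 + p.1 * conj p.2 = (r : ℂ)} := by
  intro p hp a b ha hb hab
  simp only [Set.mem_setOf_eq] at hp ⊢
  rintro ⟨r, hr, hre⟩
  apply hp
  simp only [smul_zero, zero_add, Prod.smul_fst, Prod.smul_snd, Prod.fst_zero] at hre
  rcases eq_or_lt_of_le hb with hb0 | hb0
  · simp only [← hb0, zero_smul, Prod.fst_zero, Prod.snd_zero, map_zero, mul_zero,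
      add_zero] at hre
    exact absurd hre (by
      intro h
      have : (1 : ℝ) = r := by exact_mod_cast h
      linarith)
  · have hre' : 1 + (b^2 : ℂ) * (p.1 * conj p.2) = (r : ℂ) := by
      rw [← hre]
      simp only [Prod.smul_fst, Prod.smul_snd, Complex.real_smul, map_mul, Complex.conj_ofReal]
      push_cast
      ring
    have hb2 : (b:ℂ)^2 ≠ 0 := pow_ne_zero _ (Complex.ofReal_ne_zero.2 hb0.ne')
    have key : p.1 * conj p.2 = ((r - 1 : ℝ) : ℂ) / ((b:ℝ)^2 : ℂ) := by
      field_simp at hre' ⊢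
      push_cast at hre' ⊢
      have hbinv : (b:ℂ) * (b:ℂ)⁻¹ = 1 := mul_inv_cancel₀ (Complex.ofReal_ne_zero.2 hb0.ne')
      linear_combination (↑b)⁻¹ ^ 2 * hre' - p.1 * conj p.2 * (1 + (b:ℂ) * (b:ℂ)⁻¹) * hbinv
    refine ⟨1 + (r - 1) / b^2, ?_, ?_⟩
    · have hb1 : b ≤ 1 := by linarith
      have hb2' : (0:ℝ) < b^2 := by positivity
      have hb2le : b^2 ≤ 1 := by nlinarith
      have : (r - 1) / b^2 ≤ -1 := by
        rw [div_le_iff₀ hb2']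
        nlinarith
      linarith
    · rw [key]
      push_cast
      ring

/-- The set `𝒮 = {(z,w) ∈ ℂ×ℂ : 1 + z·conj w ∉ (-∞,0]}` is simply connected. -/
theorem S_simply_connected :
    SimplyConnectedSpace
      ({p : ℂ × ℂ | ¬∃ r : ℝ, r ≤ 0 ∧ 1 + p.1 * conj p.2 = (r : ℂ)} : Set (ℂ × ℂ)) := by
  have hne : ({p : ℂ × ℂ | ¬∃ r : ℝ, r ≤ 0 ∧ 1 + p.1 * conj p.2 = (r : ℂ)} : Set (ℂ × ℂ)).Nonempty := by
    refine ⟨0, ?_⟩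
    simp only [Set.mem_setOf_eq]
    rintro ⟨r, hr, h⟩
    simp only [Prod.fst_zero, Prod.snd_zero, map_zero, mul_zero, add_zero] at h
    have : (1:ℝ) = r := by exact_mod_cast h
    linarith
  have := S_starConvex.contractibleSpace hne
  exact SimplyConnectedSpace.ofContractible _
end

section
/- Let α, β ∈ ℂ with |α|²+|β|² = 1, let a < b be reals, and let γ : [a,b] → ℂ be a C¹ curve with −conj(β)·γ(t) + conj(α) ≠ 0 for all t ∈ [a,b]. Let uγ(t) = (α·γ(t)+β)/(−conj(β)·γ(t)+conj(α)) and set j(z) = (−conj(β)·z+conj(α))^{−2}. Then exp(i·∫_a^b ρ_{uγ(t)}((uγ)'(t)) dt) = (j(γ(b))/conj(j(γ(b)))) · (conj(j(γ(a)))/j(γ(a))) · exp(i·∫_a^b ρ_{γ(t)}(γ'(t)) dt). -/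
open Complex ComplexConjugate

/-- The primitive `ρ` of the Kähler form of `ℂP¹`: `ρ_z(v) = 4·Im(conj z·v)/(1+|z|²)`. -/
noncomputable def rho (z v : ℂ) : ℝ := 4 * ((conj z) * v).im / (1 + ‖z‖ ^ 2)

/-- The Möbius action of `u = (α,β) ∈ SU(2)` on the affine chart of `ℂP¹`. -/
noncomputable def uMob (α β z : ℂ) : ℂ := (α * z + β) / (-(conj β) * z + conj α)

/-- The automorphy factor of `u = (α,β) ∈ SU(2)`: `j(u,z) = (-conj β·z + conj α)⁻²`. -/
noncomputable def jFactor (α β z : ℂ) : ℂ := (-(conj β) * z + conj α) ^ (-2 : ℤ)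

section helpers
lemma ofReal_comp_hasDerivWithinAt {f : ℝ → ℝ} {u x : ℝ} {s : Set ℝ}
    (hf : HasDerivWithinAt f u s x) :
    HasDerivWithinAt (fun y : ℝ => ((f y : ℝ) : ℂ)) (u : ℂ) s x := by
  simpa only [Complex.ofRealCLM_apply, Complex.ofReal_one, Complex.real_smul, mul_one, Function.comp_def] using
    Complex.ofRealCLM.hasDerivAt.scomp_hasDerivWithinAt x hf
end helpers

lemma zpow_neg_two_eq (d : ℂ) : d ^ (-2 : ℤ) = (d ^ 2)⁻¹ := by
  rw [zpow_neg]; norm_cast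

lemma uMob_hasDerivAt (α β z : ℂ) (hu : ‖α‖ ^ 2 + ‖β‖ ^ 2 = 1)
    (hd : -(conj β) * z + conj α ≠ 0) :
    HasDerivAt (uMob α β) (jFactor α β z) z := by
  have hu' : α * conj α + β * conj β = 1 := by
    rw [Complex.mul_conj, Complex.mul_conj, ← Complex.ofReal_add, ← Complex.sq_norm,
      ← Complex.sq_norm, hu, Complex.ofReal_one]
  have h1 : HasDerivAt (fun w => α * w + β) α z := by
    simpa using ((hasDerivAt_id z).const_mul α).add_const β
  have h2 : HasDerivAt (fun w => -(conj β) * w + conj α) (-(conj β)) z := by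
    simpa using ((hasDerivAt_id z).const_mul (-(conj β))).add_const (conj α)
  have h3 := h1.div h2 hd
  have hnum : α * (-(conj β) * z + conj α) - (α * z + β) * -(conj β) = 1 := by
    linear_combination hu'
  rw [hnum] at h3
  have heq : (1 : ℂ) / (-(conj β) * z + conj α) ^ 2 = jFactor α β z := by
    rw [jFactor, zpow_neg_two_eq, one_div]
  rw [heq] at h3
  exact h3

lemma rho_transform (α β z v : ℂ) (hu : ‖α‖ ^ 2 + ‖β‖ ^ 2 = 1)
    (hd : -(conj β) * z + conj α ≠ 0) :
    rho (uMob α β z) (jFactor α β z * v) =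
      rho z v + (-4) * ((-(conj β) * v) / (-(conj β) * z + conj α)).im := by
  set d : ℂ := -(conj β) * z + conj α with hd_def
  set n : ℂ := α * z + β with hn_def
  clear_value d n
  have hNd : Complex.normSq d ≠ 0 := by simpa [Complex.normSq_eq_zero] using hd
  have hNd' : (0:ℝ) < Complex.normSq d :=
    lt_of_le_of_ne (Complex.normSq_nonneg d) (Ne.symm hNd)
  have hS : (0:ℝ) < 1 + ‖z‖ ^ 2 := by positivity
  have hu' : α * conj α + β * conj β = 1 := by
    rw [Complex.mul_conj, Complex.mul_conj, ← Complex.ofReal_add, ← Complex.sq_norm,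
      ← Complex.sq_norm, hu, Complex.ofReal_one]
  have habs : 1 + ‖uMob α β z‖ ^ 2
      = (1 + ‖z‖ ^ 2) / Complex.normSq d := by
    have h1 : Complex.normSq d + Complex.normSq n = 1 + Complex.normSq z := by
      have : ((Complex.normSq d + Complex.normSq n : ℝ) : ℂ)
          = ((1 + Complex.normSq z : ℝ) : ℂ) := by
        push_cast
        rw [← Complex.mul_conj, ← Complex.mul_conj, ← Complex.mul_conj]
        have e1 : conj d = -β * conj z + α := by simp [hd_def]
        have e2 : conj n = conj α * conj z + conj β := by simp [hn_def]
        rw [e1, e2, hd_def, hn_def]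
        linear_combination (1 + z * conj z) * hu'
      exact_mod_cast this
    rw [uMob, ← hd_def, ← hn_def, Complex.sq_norm, Complex.normSq_div, Complex.sq_norm]
    field_simp
    linarith [h1]
  have e1 : (Complex.normSq d : ℂ) * (conj (uMob α β z) * (jFactor α β z * v))
      = conj z * v + ((1 + ‖z‖ ^ 2 : ℝ) : ℂ) * (conj β * v / d) := by
    have hzz : ((1 + ‖z‖ ^ 2 : ℝ) : ℂ) = 1 + z * conj z := by
      rw [Complex.mul_conj]
      norm_cast
      rw [Complex.sq_norm]
    rw [hzz, show ((Complex.normSq d : ℝ) : ℂ) = d * conj d from (Complex.mul_conj d).symm]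
    rw [uMob, jFactor, ← hd_def, ← hn_def]
    have hj : d ^ (-2 : ℤ) = (d ^ 2)⁻¹ := by rw [zpow_neg]; norm_cast
    have e2 : conj n = conj α * conj z + conj β := by simp [hn_def]
    have e3 : conj d = -β * conj z + α := by simp [hd_def]
    have hcd : conj d ≠ 0 := by simpa using hd
    rw [hj, map_div₀]
    field_simp
    rw [e2, hd_def]
    ring
  have e1im : Complex.normSq d * (conj (uMob α β z) * (jFactor α β z * v)).im
      = (conj z * v).im + (1 + ‖z‖ ^ 2) * (conj β * v / d).im := by
    have h := congrArg Complex.im e1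
    rwa [Complex.im_ofReal_mul, Complex.add_im, Complex.im_ofReal_mul] at h
  have him : ((-(conj β) * v) / d).im = -((conj β * v / d).im) := by
    have h : (-(conj β) * v) / d = -(conj β * v / d) := by ring
    rw [h, Complex.neg_im]
  rw [rho, rho, habs, him]
  have harith : ∀ X Y Z N S : ℝ, 0 < N → 0 < S → N * X = Y + S * Z →
      4 * X / (S / N) = 4 * Y / S + -4 * -Z := by
    intro X Y Z N S hN hS h
    rw [div_div_eq_mul_div]
    field_simp
    nlinarith [h]
  exact harith _ _ _ _ _ hNd' hS e1im



/-- Equation (6.4) in the proof of Lemma 6.1 of the paper, for `M = ℂP¹`: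
`exp(i∫_{uγ} ρ) = (j(g,γ(b))/conj j(g,γ(b)))·(conj j(g,γ(a))/j(g,γ(a)))·exp(i∫_γ ρ)`. -/
theorem exp_path_integral_transformation (α β : ℂ)
    (hu : ‖α‖ ^ 2 + ‖β‖ ^ 2 = 1)
    (a b : ℝ) (hab : a < b) (γ : ℝ → ℂ) (hγ : ContDiffOn ℝ 1 γ (Set.Icc a b))
    (hden : ∀ t ∈ Set.Icc a b, -(conj β) * γ t + conj α ≠ 0) :
    Complex.exp (Complex.I *
        ((∫ t in a..b, rho (uMob α β (γ t)) (deriv (fun s => uMob α β (γ s)) t)) : ℝ)) =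
      jFactor α β (γ b) / conj (jFactor α β (γ b)) *
        (conj (jFactor α β (γ a)) / jFactor α β (γ a)) *
        Complex.exp (Complex.I * ((∫ t in a..b, rho (γ t) (deriv γ t)) : ℝ)) := by
  have hab' : a ≤ b := hab.le
  set g : ℝ → ℂ := derivWithin γ (Set.Icc a b) with hg_def
  have hγc : ContinuousOn γ (Set.Icc a b) := hγ.continuousOn
  have hg_cont : ContinuousOn g (Set.Icc a b) :=
    hγ.continuousOn_derivWithin (uniqueDiffOn_Icc hab) le_rfl
  set D : ℝ → ℂ := fun t => -(conj β) * γ t + conj α with hD_def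
  have hD_cont : ContinuousOn D (Set.Icc a b) :=
    (continuousOn_const.mul hγc).add continuousOn_const
  set Cc : ℝ → ℝ := fun t => -4 * ((-(conj β) * g t) / D t).im with hC_def
  have hC_cont : ContinuousOn Cc (Set.Icc a b) :=
    continuousOn_const.mul (Complex.continuous_im.comp_continuousOn
      ((continuousOn_const.mul hg_cont).div hD_cont hden))
  set B : ℝ → ℝ := fun t => rho (γ t) (g t) with hB_def
  have hB_cont : ContinuousOn B (Set.Icc a b) := by
    apply ContinuousOn.div
    · exact continuousOn_const.mul (Complex.continuous_im.comp_continuousOn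
        ((Complex.continuous_conj.comp_continuousOn hγc).mul hg_cont))
    · exact continuousOn_const.add ((continuous_norm.comp_continuousOn hγc).pow 2)
    · intro t ht; positivity
  have hDne : ∀ t ∈ Set.Icc a b, D t ≠ 0 := by
    intro t ht; simp only [hD_def]; exact hden t ht
  have hderivIoo : ∀ t ∈ Set.Ioo a b, HasDerivAt γ (g t) t := by
    intro t ht
    have hmem : Set.Icc a b ∈ nhds t := Icc_mem_nhds ht.1 ht.2
    have hdiff : DifferentiableAt ℝ γ t :=
      ((hγ.differentiableOn one_ne_zero) t (Set.Ioo_subset_Icc_self ht)).differentiableAt hmem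
    have heq : g t = deriv γ t := by rw [hg_def]; exact derivWithin_of_mem_nhds hmem
    rw [heq]; exact hdiff.hasDerivAt
  -- a.e. away from b
  have hb0 : ∀ᵐ t : ℝ ∂MeasureTheory.volume, t ≠ b := by
    rw [MeasureTheory.ae_iff]
    simp only [not_not, Set.setOf_eq_eq_singleton]
    exact MeasureTheory.measure_singleton b
  have hcongr2 : (∫ t in a..b, rho (γ t) (deriv γ t)) = ∫ t in a..b, B t := by
    apply intervalIntegral.integral_congr_ae
    filter_upwards [hb0] with t htb hmem
    rw [Set.uIoc_of_le hab'] at hmem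
    have htIoo : t ∈ Set.Ioo a b := ⟨hmem.1, lt_of_le_of_ne hmem.2 htb⟩
    rw [(hderivIoo t htIoo).deriv]
  have huIcc : Set.uIcc a b = Set.Icc a b := Set.uIcc_of_le hab'
  have hBI : IntervalIntegrable B MeasureTheory.volume a b :=
    (hB_cont.mono huIcc.le).intervalIntegrable
  have hCI : IntervalIntegrable Cc MeasureTheory.volume a b :=
    (hC_cont.mono huIcc.le).intervalIntegrable
  have hsplit : (∫ t in a..b, (B t + Cc t)) = (∫ t in a..b, B t) + ∫ t in a..b, Cc t :=
    intervalIntegral.integral_add hBI hCI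
  have hcongr1 : (∫ t in a..b, rho (uMob α β (γ t)) (deriv (fun s => uMob α β (γ s)) t))
      = ∫ t in a..b, (B t + Cc t) := by
    apply intervalIntegral.integral_congr_ae
    filter_upwards [hb0] with t htb hmem
    rw [Set.uIoc_of_le hab'] at hmem
    have htIoo : t ∈ Set.Ioo a b := ⟨hmem.1, lt_of_le_of_ne hmem.2 htb⟩
    have htIcc : t ∈ Set.Icc a b := Set.Ioo_subset_Icc_self htIoo
    have hcomp : HasDerivAt (fun s => uMob α β (γ s)) (jFactor α β (γ t) * g t) t :=
      (uMob_hasDerivAt α β (γ t) hu (hden t htIcc)).comp t (hderivIoo t htIoo)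
    rw [hcomp.deriv, rho_transform α β (γ t) (g t) hu (hden t htIcc)]
  clear_value g D Cc B
  -- the ODE part
  set F : ℝ → ℝ := fun t => ∫ s in a..t, Cc s with hF_def
  set H : ℝ → ℂ := fun t => Complex.exp (I * F t) * (D t) ^ 2 / (conj (D t)) ^ 2 with hH_def
  clear_value F H
  have hHd : ∀ t ∈ Set.Icc a b, HasDerivWithinAt H 0 (Set.Icc a b) t := by
    intro t ht
    haveI : Fact (t ∈ Set.Icc a b) := ⟨ht⟩
    have hCIt : IntervalIntegrable Cc MeasureTheory.volume a t :=
      ((hC_cont.mono (Set.Icc_subset_Icc le_rfl ht.2)).mono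
        (Set.uIcc_of_le ht.1).le).intervalIntegrable
    have hFt : HasDerivWithinAt F (Cc t) (Set.Icc a b) t := by
      rw [hF_def]
      exact intervalIntegral.integral_hasDerivWithinAt_right hCIt
        (hC_cont.stronglyMeasurableAtFilter_nhdsWithin measurableSet_Icc t)
        (hC_cont t ht)
    have hgw : HasDerivWithinAt γ (g t) (Set.Icc a b) t := by
      rw [hg_def]
      exact ((hγ.differentiableOn one_ne_zero) t ht).hasDerivWithinAt
    have hDw : HasDerivWithinAt D (-(conj β) * g t) (Set.Icc a b) t := by
      have h := (hgw.const_mul (-(conj β))).add_const (conj α)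
      simpa [hD_def, neg_mul] using h
    have hQw : HasDerivWithinAt (fun s => conj (D s)) (conj (-(conj β) * g t))
        (Set.Icc a b) t := hDw.star
    have hexp : HasDerivWithinAt (fun s => Complex.exp (I * (F s : ℝ)))
        (Complex.exp (I * (F t : ℝ)) * (I * (Cc t : ℝ))) (Set.Icc a b) t := by
      simpa using ((ofReal_comp_hasDerivWithinAt hFt).const_mul I).cexp
    have hP2 : HasDerivWithinAt (fun s => D s ^ 2)
        ((-(conj β) * g t) * D t + D t * (-(conj β) * g t)) (Set.Icc a b) t := by
      simpa only [pow_two, Pi.mul_def] using hDw.mul hDw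
    have hQ2 : HasDerivWithinAt (fun s => conj (D s) ^ 2)
        (conj (-(conj β) * g t) * conj (D t) + conj (D t) * conj (-(conj β) * g t))
        (Set.Icc a b) t := by
      simpa only [pow_two, Pi.mul_def] using hQw.mul hQw
    have hnum := hexp.mul hP2
    have hPne : D t ≠ 0 := hDne t ht
    have hQne : conj (D t) ≠ 0 := by simpa using hPne
    have hdiv := hnum.div hQ2 (pow_ne_zero 2 hQne)
    have hw := Complex.sub_conj ((conj β * g t) / D t)
    rw [map_div₀, map_mul, Complex.conj_conj] at hw
    field_simp [hPne, hQne] at hw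
    push_cast at hw
    rw [hH_def]
    convert hdiv using 1
    · rfl
    · rfl
    symm
    rw [div_eq_zero_iff]; left
    simp only [hC_def, neg_mul, neg_div, Complex.neg_im, map_neg, map_mul, Complex.conj_conj,
      mul_neg, neg_neg, Pi.mul_apply]
    push_cast
    linear_combination (-2 * Complex.exp (I * (F t : ℝ)) * D t * conj (D t)) * hw
  have hH_cont : ContinuousOn H (Set.Icc a b) := fun t ht => (hHd t ht).continuousWithinAt
  have hconst := constant_of_has_deriv_right_zero hH_cont (fun x hx =>
    (hHd x (Set.Ico_subset_Icc_self hx)).mono_of_mem_nhdsWithin (Icc_mem_nhdsGE_of_mem hx))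
  have hHb := hconst b (Set.right_mem_Icc.2 hab')
  have hFa : F a = 0 := by
    simp only [hF_def]
    exact intervalIntegral.integral_same
  have hPb : D b ≠ 0 := hDne b (Set.right_mem_Icc.2 hab')
  have hPa : D a ≠ 0 := hDne a (Set.left_mem_Icc.2 hab')
  have hQb : conj (D b) ≠ 0 := by simpa using hPb
  have hQa : conj (D a) ≠ 0 := by simpa using hPa
  have key : Complex.exp (I * ((∫ t in a..b, Cc t : ℝ) : ℂ)) =
      jFactor α β (γ b) / conj (jFactor α β (γ b)) *
        (conj (jFactor α β (γ a)) / jFactor α β (γ a)) := by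
    simp only [hH_def] at hHb
    simp only [hFa, Complex.ofReal_zero, mul_zero, Complex.exp_zero, one_mul] at hHb
    have hjb : jFactor α β (γ b) = ((D b) ^ 2)⁻¹ := by
      simp only [hD_def]; exact zpow_neg_two_eq _
    have hja : jFactor α β (γ a) = ((D a) ^ 2)⁻¹ := by
      simp only [hD_def]; exact zpow_neg_two_eq _
    have hcjb : conj (jFactor α β (γ b)) = ((conj (D b)) ^ 2)⁻¹ := by
      rw [show conj (jFactor α β (γ b)) = (conj (-(conj β) * γ b + conj α)) ^ (-2 : ℤ) from
        map_zpow₀ (starRingEnd ℂ) _ _]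
      simp only [hD_def]; exact zpow_neg_two_eq _
    have hcja : conj (jFactor α β (γ a)) = ((conj (D a)) ^ 2)⁻¹ := by
      rw [show conj (jFactor α β (γ a)) = (conj (-(conj β) * γ a + conj α)) ^ (-2 : ℤ) from
        map_zpow₀ (starRingEnd ℂ) _ _]
      simp only [hD_def]; exact zpow_neg_two_eq _
    rw [hcjb, hcja, hjb, hja]
    have hFb : F b = ∫ t in a..b, Cc t := by simp only [hF_def]
    rw [← hFb]
    field_simp
    field_simp at hHb
    linear_combination hHb
  rw [hcongr1, hcongr2, hsplit, Complex.ofReal_add, mul_add, Complex.exp_add, key]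
  ring
end
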